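/- arXiv:0801.1195 — 2 statements merged into one kernel-verified Lean document; each statement's English description precedes it below -/
import Mathlib

section
/- Let a, b ≥ 1 be integers, N = 2^a·3^b, 0 ≤ k < N, and n ≥ 1. Then {rep(N^n·y) : y ∈ A_k} = ⋃_{m=0}^{N^{n−1}−1} [0,1) × (2^{an}ℤ₂ − (kN^{n−1} + m)) × (3^{bn}ℤ₃ − (kN^{n−1} + m)), and this union is pairwise disjoint; here 2^{an}ℤ₂ − c denotes the coset {2^{an}z − c : z ∈ ℤ₂} and similarly for ℤ₃. -/
open Set

noncomputable section

/-- The ambient group `G = ℝ × ℚ₂ × ℚ₃`. -/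
abbrev G : Type := ℝ × ℚ_[2] × ℚ_[3]

/-- The diagonal embedding of `ℚ` into `G`. -/
def Δ (r : ℚ) : G := ((r : ℝ), (r : ℚ_[2]), (r : ℚ_[3]))

/-- `ℤ[1/6]`, the rationals expressible with denominator `6^k`. -/
def zInv6 : Set ℚ := {q | ∃ (z : ℤ) (k : ℕ), q = z / 6 ^ k}

/-- `Γ = Δ(ℤ[1/6])`. -/
def Γ : Set G := Δ '' zInv6

/-- The fundamental domain `F = [0,1) × ℤ₂ × ℤ₃`. -/
def F : Set G := {x | x.1 ∈ Set.Ico (0 : ℝ) 1 ∧ ‖x.2.1‖ ≤ 1 ∧ ‖x.2.2‖ ≤ 1}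

/-- Coordinatewise multiplication by a rational on `G`. -/
def act (q : ℚ) (x : G) : G :=
  ((q : ℝ) * x.1, (q : ℚ_[2]) * x.2.1, (q : ℚ_[3]) * x.2.2)

/-- The atom `A_k = [k/N, (k+1)/N) × ℤ₂ × ℤ₃` of the partition `ξ`. -/
def A (N k : ℕ) : Set G :=
  {x | x.1 ∈ Set.Ico ((k : ℝ) / N) (((k : ℝ) + 1) / N) ∧ ‖x.2.1‖ ≤ 1 ∧ ‖x.2.2‖ ≤ 1}

/-- The coset rectangle `[0,1) × (2^{an}ℤ₂ - c) × (3^{bn}ℤ₃ - c)` with offset `c`. -/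
def B (a b n c : ℕ) : Set G :=
  {u | u.1 ∈ Set.Ico (0 : ℝ) 1 ∧
    (∃ z : ℚ_[2], ‖z‖ ≤ 1 ∧ u.2.1 = 2 ^ (a * n) * z - (c : ℚ_[2])) ∧
    (∃ w : ℚ_[3], ‖w‖ ≤ 1 ∧ u.2.2 = 3 ^ (b * n) * w - (c : ℚ_[3]))}

lemma norm_three_two : ‖(3 : ℚ_[2])‖ = 1 := by
  have h1 : ‖((3:ℤ) : ℚ_[2])‖ ≤ 1 := Padic.norm_int_le_one 3
  have h2 : ¬ ‖((3:ℤ) : ℚ_[2])‖ < 1 := by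
    rw [Padic.norm_intCast_lt_one_iff]; decide
  have h3 : ((3:ℤ) : ℚ_[2]) = (3 : ℚ_[2]) := by push_cast; ring
  rw [h3] at h1 h2
  exact le_antisymm h1 (not_lt.mp h2)

lemma norm_two_three : ‖(2 : ℚ_[3])‖ = 1 := by
  have h1 : ‖((2:ℤ) : ℚ_[3])‖ ≤ 1 := Padic.norm_int_le_one 2
  have h2 : ¬ ‖((2:ℤ) : ℚ_[3])‖ < 1 := by
    rw [Padic.norm_intCast_lt_one_iff]; decide
  have h3 : ((2:ℤ) : ℚ_[3]) = (2 : ℚ_[3]) := by push_cast; ring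
  rw [h3] at h1 h2
  exact le_antisymm h1 (not_lt.mp h2)

lemma norm_sub_le_one {p : ℕ} [Fact p.Prime] {x y : ℚ_[p]} (hx : ‖x‖ ≤ 1) (hy : ‖y‖ ≤ 1) :
    ‖x - y‖ ≤ 1 := by
  rw [sub_eq_add_neg]
  refine le_trans (Padic.nonarchimedean x (-y)) (max_le hx ?_)
  rwa [norm_neg]

lemma Γ_sub {x y : G} (hx : x ∈ Γ) (hy : y ∈ Γ) : x - y ∈ Γ := by
  obtain ⟨q1, ⟨z1, k1, rfl⟩, rfl⟩ := hx
  obtain ⟨q2, ⟨z2, k2, rfl⟩, rfl⟩ := hy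
  refine ⟨(z1:ℚ)/6^k1 - (z2:ℚ)/6^k2, ⟨z1 * 6^k2 - z2 * 6^k1, k1 + k2, ?_⟩, ?_⟩
  · push_cast
    field_simp
    ring
  · simp only [Δ, Prod.mk_sub_mk]
    push_cast
    rfl

lemma intCast_mem_Γ (c : ℤ) : Δ (c : ℚ) ∈ Γ := ⟨(c:ℚ), ⟨c, 0, by simp⟩, rfl⟩

lemma F_unique {u v : G} (hu : u ∈ F) (hv : v ∈ F) (h : u - v ∈ Γ) : u = v := by
  obtain ⟨q, ⟨z, k, rfl⟩, hq⟩ := h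
  obtain ⟨hu1, hu2, hu3⟩ := hu
  obtain ⟨hv1, hv2, hv3⟩ := hv
  -- components of hq
  have h1 : (((z:ℚ)/6^k : ℚ) : ℝ) = u.1 - v.1 := congrArg Prod.fst hq
  have h2 : (((z:ℚ)/6^k : ℚ) : ℚ_[2]) = u.2.1 - v.2.1 := congrArg (fun x => x.2.1) hq
  have h3 : (((z:ℚ)/6^k : ℚ) : ℚ_[3]) = u.2.2 - v.2.2 := congrArg (fun x => x.2.2) hq
  -- 2-adic divisibility
  have hn2 : ‖((z:ℤ) : ℚ_[2])‖ ≤ (2:ℝ)^(-(k:ℤ)) := by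
    have hnorm : ‖u.2.1 - v.2.1‖ ≤ 1 := norm_sub_le_one hu2 hv2
    have e : ((z:ℤ) : ℚ_[2]) = (u.2.1 - v.2.1) * 6^k := by
      rw [← h2]; push_cast; field_simp
    rw [e, norm_mul]
    have hp2 : ‖(2:ℚ_[2])^k‖ = (2:ℝ)^(-(k:ℤ)) := by
      simpa using Padic.norm_p_pow (p := 2) k
    have h6 : ‖(6 : ℚ_[2])^k‖ = (2:ℝ)^(-(k:ℤ)) := by
      have e6 : (6 : ℚ_[2])^k = 2^k * 3^k := by rw [← mul_pow]; norm_num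
      rw [e6, norm_mul, hp2, norm_pow, norm_three_two, one_pow, mul_one]
    rw [h6]
    calc ‖u.2.1 - v.2.1‖ * (2:ℝ)^(-(k:ℤ)) ≤ 1 * (2:ℝ)^(-(k:ℤ)) := by
          apply mul_le_mul_of_nonneg_right hnorm (by positivity)
      _ = (2:ℝ)^(-(k:ℤ)) := one_mul _
  have hd2 : ((2:ℤ)^k) ∣ z := (Padic.norm_int_le_pow_iff_dvd z k).mp hn2
  have hn3 : ‖((z:ℤ) : ℚ_[3])‖ ≤ (3:ℝ)^(-(k:ℤ)) := by
    have hnorm : ‖u.2.2 - v.2.2‖ ≤ 1 := norm_sub_le_one hu3 hv3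
    have e : ((z:ℤ) : ℚ_[3]) = (u.2.2 - v.2.2) * 6^k := by
      rw [← h3]; push_cast; field_simp
    rw [e, norm_mul]
    have hp3 : ‖(3:ℚ_[3])^k‖ = (3:ℝ)^(-(k:ℤ)) := by
      simpa using Padic.norm_p_pow (p := 3) k
    have h6 : ‖(6 : ℚ_[3])^k‖ = (3:ℝ)^(-(k:ℤ)) := by
      have e6 : (6 : ℚ_[3])^k = 2^k * 3^k := by rw [← mul_pow]; norm_num
      rw [e6, norm_mul, norm_pow, norm_two_three, one_pow, one_mul, hp3]
    rw [h6]
    calc ‖u.2.2 - v.2.2‖ * (3:ℝ)^(-(k:ℤ)) ≤ 1 * (3:ℝ)^(-(k:ℤ)) := by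
          apply mul_le_mul_of_nonneg_right hnorm (by positivity)
      _ = (3:ℝ)^(-(k:ℤ)) := one_mul _
  have hd3 : ((3:ℤ)^k) ∣ z := (Padic.norm_int_le_pow_iff_dvd z k).mp hn3
  have hcop : IsCoprime ((2:ℤ)^k) ((3:ℤ)^k) := by
    apply IsCoprime.pow
    rw [Int.isCoprime_iff_gcd_eq_one]; decide
  have hd6 : ((6:ℤ)^k) ∣ z := by
    have : ((2:ℤ)^k) * ((3:ℤ)^k) ∣ z := hcop.mul_dvd hd2 hd3
    rwa [show ((6:ℤ):ℤ)^k = (2:ℤ)^k * 3^k by rw [← mul_pow]; norm_num]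
  obtain ⟨t, rfl⟩ := hd6
  have hq0 : ((6 ^ k * t : ℤ) : ℚ) / 6 ^ k = (t : ℚ) := by
    push_cast; field_simp
  rw [hq0] at h1 h2 h3
  -- real part forces t = 0
  have ht : t = 0 := by
    have hb1 : (t:ℝ) < 1 := by rw [show ((t:ℚ):ℝ) = (t:ℝ) by push_cast; rfl] at h1; rw [h1]; linarith [hu1.2, hv1.1]
    have hb2 : (-1:ℝ) < t := by rw [show ((t:ℚ):ℝ) = (t:ℝ) by push_cast; rfl] at h1; rw [h1]; linarith [hu1.1, hv1.2]
    have b1 : t < 1 := by exact_mod_cast hb1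
    have b2 : -1 < t := by exact_mod_cast hb2
    omega
  subst ht
  simp only [Int.cast_zero, Rat.cast_zero] at h1 h2 h3
  have e1 : u.1 = v.1 := by linarith [h1]
  have e2 : u.2.1 = v.2.1 := sub_eq_zero.mp h2.symm
  have e3 : u.2.2 = v.2.2 := sub_eq_zero.mp h3.symm
  exact Prod.ext_iff.mpr ⟨e1, Prod.ext_iff.mpr ⟨e2, e3⟩⟩

lemma rep_eq (rep : G → G) (hrep : ∀ x : G, rep x ∈ F ∧ x - rep x ∈ Γ)
    {x f : G} (hf : f ∈ F) (hxf : x - f ∈ Γ) : rep x = f := by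
  refine F_unique (hrep x).1 hf ?_
  have : rep x - f = (x - f) - (x - rep x) := by ring
  rw [this]
  exact Γ_sub hxf (hrep x).2

lemma norm_natCast_le_one (p : ℕ) [Fact p.Prime] (c : ℕ) : ‖((c : ℕ) : ℚ_[p])‖ ≤ 1 := by
  rw [show ((c : ℚ_[p])) = ((c : ℤ) : ℚ_[p]) by push_cast; rfl]
  exact Padic.norm_int_le_one c

/-- The image of the atom `A_k` under multiplication by `N^n` on `G/Γ`, computed in `F`,
is the disjoint union over `0 ≤ m < N^{n-1}` of the coset rectangles
`[0,1) × (2^{an}ℤ₂ - (kN^{n-1}+m)) × (3^{bn}ℤ₃ - (kN^{n-1}+m))`. -/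
theorem image_atom_iterate (rep : G → G) (hrep : ∀ x : G, rep x ∈ F ∧ x - rep x ∈ Γ)
    (a b : ℕ) (ha : 1 ≤ a) (hb : 1 ≤ b) (N : ℕ) (hN : N = 2 ^ a * 3 ^ b)
    (k : ℕ) (hk : k < N) (n : ℕ) (hn : 1 ≤ n) :
    ((fun y => rep (act ((N : ℚ) ^ n) y)) '' A N k =
      ⋃ m ∈ Finset.range (N ^ (n - 1)), B a b n (k * N ^ (n - 1) + m)) ∧
    ∀ m ∈ Finset.range (N ^ (n - 1)), ∀ m' ∈ Finset.range (N ^ (n - 1)), m ≠ m' →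
      Disjoint (B a b n (k * N ^ (n - 1) + m)) (B a b n (k * N ^ (n - 1) + m')) := by
  have hNpos : 0 < N := by
    rw [hN]; exact Nat.mul_pos (Nat.pow_pos (by norm_num)) (Nat.pow_pos (by norm_num))
  set n' : ℕ := n - 1 with hn'def
  have hnn : n = n' + 1 := by omega
  set L : ℕ := N ^ n' with hLdef
  set K : ℕ := k * L with hKdef
  have hLpos : 0 < L := Nat.pow_pos hNpos
  have hKL : (k + 1) * L = K + L := by rw [hKdef]; ring
  have hLN : L ≤ N ^ n := by
    rw [hnn, pow_succ]
    exact Nat.le_mul_of_pos_right _ hNpos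
  have hNR : (0 : ℝ) < (N : ℝ) := by exact_mod_cast hNpos
  have hNR0 : (N : ℝ) ≠ 0 := ne_of_gt hNR
  have hcast2 : (((N : ℚ) ^ n : ℚ) : ℚ_[2]) = 2 ^ (a * n) * 3 ^ (b * n) := by
    rw [hN]; push_cast; rw [mul_pow, ← pow_mul, ← pow_mul]
  have hcast3 : (((N : ℚ) ^ n : ℚ) : ℚ_[3]) = 2 ^ (a * n) * 3 ^ (b * n) := by
    rw [hN]; push_cast; rw [mul_pow, ← pow_mul, ← pow_mul]
  have h3pow2 : ‖(3 : ℚ_[2]) ^ (b * n)‖ = 1 := by rw [norm_pow, norm_three_two, one_pow]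
  have h2pow3 : ‖(2 : ℚ_[3]) ^ (a * n)‖ = 1 := by rw [norm_pow, norm_two_three, one_pow]
  have hn22 : ‖(2 : ℚ_[2])‖ = 2⁻¹ := by simpa using Padic.norm_p (p := 2)
  have hn33 : ‖(3 : ℚ_[3])‖ = 3⁻¹ := by simpa using Padic.norm_p (p := 3)
  have h2pow2_le : ‖(2 : ℚ_[2]) ^ (a * n)‖ ≤ 1 := by
    rw [norm_pow, hn22]
    exact pow_le_one₀ (by norm_num) (by norm_num)
  have h3pow3_le : ‖(3 : ℚ_[3]) ^ (b * n)‖ ≤ 1 := by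
    rw [norm_pow, hn33]
    exact pow_le_one₀ (by norm_num) (by norm_num)
  have h3ne2 : (3 : ℚ_[2]) ≠ 0 := by norm_num
  have h2ne3 : (2 : ℚ_[3]) ≠ 0 := by norm_num
  constructor
  · ext u
    simp only [Set.mem_image, Set.mem_iUnion, Finset.mem_range, A, B, Set.mem_setOf_eq]
    constructor
    · rintro ⟨y, ⟨hy1, hy2, hy3⟩, rfl⟩
      set r : ℝ := (((N : ℚ) ^ n : ℚ) : ℝ) * y.1 with hr
      have hrval : r = (N : ℝ) ^ n * y.1 := by rw [hr]; push_cast; ring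
      have hlow : ((K : ℕ) : ℝ) ≤ r := by
        rw [hrval, hnn, hKdef, hLdef]
        push_cast
        calc ((k : ℝ) * (N : ℝ) ^ n') = (N : ℝ) ^ n' * N * ((k : ℝ) / N) := by
              field_simp
          _ ≤ (N : ℝ) ^ n' * N * y.1 := by
              apply mul_le_mul_of_nonneg_left hy1.1 (by positivity)
          _ = (N : ℝ) ^ (n' + 1) * y.1 := by ring
      have hhigh : r < ((K + L : ℕ) : ℝ) := by
        rw [hrval, hnn, ← hKL, hLdef]
        push_cast
        calc (N : ℝ) ^ (n' + 1) * y.1 = (N : ℝ) ^ n' * N * y.1 := by ring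
          _ < (N : ℝ) ^ n' * N * (((k : ℝ) + 1) / N) := by
              apply mul_lt_mul_of_pos_left hy1.2 (by positivity)
          _ = ((k : ℝ) + 1) * (N : ℝ) ^ n' := by field_simp
      set c : ℤ := ⌊r⌋ with hcdef
      have hc1 : ((K : ℕ) : ℤ) ≤ c := Int.le_floor.mpr (by exact_mod_cast hlow)
      have hc2 : c < ((K + L : ℕ) : ℤ) := Int.floor_lt.mpr (by exact_mod_cast hhigh)
      set m : ℕ := (c - (K : ℕ)).toNat with hmdef
      have hmc : c = ((K + m : ℕ) : ℤ) := by push_cast [hmdef]; push_cast at hc1 hc2; omega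
      have hmL : m < L := by push_cast at hc1 hc2; omega
      refine ⟨m, hmL, ?_⟩
      set f : G := (r - (c : ℝ),
        (((N : ℚ) ^ n : ℚ) : ℚ_[2]) * y.2.1 - (c : ℚ_[2]),
        (((N : ℚ) ^ n : ℚ) : ℚ_[3]) * y.2.2 - (c : ℚ_[3])) with hfdef
      have hNnorm2 : ‖(((N : ℚ) ^ n : ℚ) : ℚ_[2]) * y.2.1‖ ≤ 1 := by
        rw [norm_mul, hcast2, norm_mul, h3pow2, mul_one]
        calc ‖(2:ℚ_[2]) ^ (a*n)‖ * ‖y.2.1‖ ≤ 1 * 1 :=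
              mul_le_mul h2pow2_le hy2 (norm_nonneg _) (by norm_num)
          _ = 1 := by norm_num
      have hNnorm3 : ‖(((N : ℚ) ^ n : ℚ) : ℚ_[3]) * y.2.2‖ ≤ 1 := by
        rw [norm_mul, hcast3, norm_mul, h2pow3, one_mul]
        calc ‖(3:ℚ_[3]) ^ (b*n)‖ * ‖y.2.2‖ ≤ 1 * 1 :=
              mul_le_mul h3pow3_le hy3 (norm_nonneg _) (by norm_num)
          _ = 1 := by norm_num
      have hfF : f ∈ F := by
        refine ⟨⟨sub_nonneg.mpr (Int.floor_le r), ?_⟩, ?_, ?_⟩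
        · have := Int.lt_floor_add_one r
          rw [← hcdef] at this
          simp only [hfdef]
          linarith
        · exact norm_sub_le_one hNnorm2 (Padic.norm_int_le_one c)
        · exact norm_sub_le_one hNnorm3 (Padic.norm_int_le_one c)
      have hxf : act ((N : ℚ) ^ n) y - f = Δ ((c : ℤ) : ℚ) := by
        simp only [act, Δ, hfdef, hr, Prod.mk_sub_mk]
        refine Prod.ext_iff.mpr ⟨?_, Prod.ext_iff.mpr ⟨?_, ?_⟩⟩ <;> (push_cast; ring)
      have hrep_eq : rep (act ((N : ℚ) ^ n) y) = f :=
        rep_eq rep hrep hfF (hxf ▸ intCast_mem_Γ c)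
      rw [hrep_eq]
      refine ⟨⟨sub_nonneg.mpr (Int.floor_le r), ?_⟩, ?_, ?_⟩
      · have := Int.lt_floor_add_one r
        rw [← hcdef] at this
        simp only [hfdef]
        linarith
      · refine ⟨3 ^ (b * n) * y.2.1, ?_, ?_⟩
        · rw [norm_mul, h3pow2, one_mul]; exact hy2
        · simp only [hfdef]
          rw [hcast2, hmc]
          push_cast
          ring
      · refine ⟨2 ^ (a * n) * y.2.2, ?_, ?_⟩
        · rw [norm_mul, h2pow3, one_mul]; exact hy3
        · simp only [hfdef]
          rw [hcast3, hmc]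
          push_cast
          ring
    · rintro ⟨m, hmL, hu1, ⟨z, hz, hz2⟩, ⟨w, hw, hw2⟩⟩
      set C : ℕ := K + m with hCdef
      set y : G := ((u.1 + (C : ℝ)) / (N : ℝ) ^ n,
        ((3 : ℚ_[2]) ^ (b * n))⁻¹ * z, ((2 : ℚ_[3]) ^ (a * n))⁻¹ * w) with hydef
      have hCub : C + 1 ≤ K + L := by omega
      refine ⟨y, ⟨⟨?_, ?_⟩, ?_, ?_⟩, ?_⟩
      · -- k/N ≤ y.1
        have e1 : (k : ℝ) / N = ((K : ℕ) : ℝ) / (N : ℝ) ^ n := by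
          rw [hnn, hKdef, hLdef]; push_cast; field_simp; ring
        have hnum : ((K : ℕ) : ℝ) ≤ u.1 + (C : ℝ) := by
          have : (K : ℕ) ≤ C := by omega
          have h' : ((K : ℕ) : ℝ) ≤ (C : ℝ) := by exact_mod_cast this
          linarith [hu1.1]
        rw [e1]
        simp only [hydef]
        gcongr
      · -- y.1 < (k+1)/N
        have e2 : ((k : ℝ) + 1) / N = ((K + L : ℕ) : ℝ) / (N : ℝ) ^ n := by
          rw [hnn, ← hKL, hLdef]; push_cast; field_simp; ring
        have hnum : u.1 + (C : ℝ) < ((K + L : ℕ) : ℝ) := by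
          have h' : (C : ℝ) + 1 ≤ ((K + L : ℕ) : ℝ) := by exact_mod_cast hCub
          linarith [hu1.2]
        rw [e2]
        simp only [hydef]
        exact (div_lt_div_iff_of_pos_right (by positivity)).mpr hnum
      · simp only [hydef]
        rw [norm_mul, norm_inv, h3pow2, inv_one, one_mul]; exact hz
      · simp only [hydef]
        rw [norm_mul, norm_inv, h2pow3, inv_one, one_mul]; exact hw
      · -- rep (act N^n y) = u
        have hact : act ((N : ℚ) ^ n) y = (u.1 + (C : ℝ), 2 ^ (a * n) * z, 3 ^ (b * n) * w) := by
          simp only [act, hydef]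
          refine Prod.ext_iff.mpr ⟨?_, Prod.ext_iff.mpr ⟨?_, ?_⟩⟩
          · push_cast
            field_simp
          · rw [hcast2]
            field_simp
          · rw [hcast3]
            field_simp
        have huF : u ∈ F := by
          refine ⟨hu1, ?_, ?_⟩
          · rw [hz2]
            refine norm_sub_le_one ?_ (norm_natCast_le_one 2 C)
            rw [norm_mul]
            calc ‖(2:ℚ_[2]) ^ (a*n)‖ * ‖z‖ ≤ 1 * 1 :=
                  mul_le_mul h2pow2_le hz (norm_nonneg _) (by norm_num)
              _ = 1 := by norm_num
          · rw [hw2]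
            refine norm_sub_le_one ?_ (norm_natCast_le_one 3 C)
            rw [norm_mul]
            calc ‖(3:ℚ_[3]) ^ (b*n)‖ * ‖w‖ ≤ 1 * 1 :=
                  mul_le_mul h3pow3_le hw (norm_nonneg _) (by norm_num)
              _ = 1 := by norm_num
        have hxu : act ((N : ℚ) ^ n) y - u = Δ (((C : ℤ) : ℚ)) := by
          rw [hact]
          simp only [Δ]
          refine Prod.ext_iff.mpr ⟨?_, Prod.ext_iff.mpr ⟨?_, ?_⟩⟩
          · simp only [Prod.fst_sub]
            push_cast; ring
          · simp only [Prod.snd_sub, Prod.fst_sub]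
            rw [hz2]; push_cast; ring
          · simp only [Prod.snd_sub]
            rw [hw2]; push_cast; ring
        exact rep_eq rep hrep huF (hxu ▸ intCast_mem_Γ (C : ℤ))
  · intro m hm m' hm' hne
    rw [Finset.mem_range] at hm hm'
    rw [Set.disjoint_left]
    intro u hu hu'
    simp only [B, Set.mem_setOf_eq] at hu hu'
    obtain ⟨_, ⟨z, hz, hz2⟩, ⟨w, hw, hw2⟩⟩ := hu
    obtain ⟨_, ⟨z', hz', hz2'⟩, ⟨w', hw', hw2'⟩⟩ := hu'
    set d : ℤ := (m : ℤ) - (m' : ℤ) with hddef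
    have e2 : ((d : ℤ) : ℚ_[2]) = 2 ^ (a * n) * (z - z') := by
      have h := hz2.symm.trans hz2'
      push_cast at h
      push_cast [hddef]
      linear_combination -h
    have e3 : ((d : ℤ) : ℚ_[3]) = 3 ^ (b * n) * (w - w') := by
      have h := hw2.symm.trans hw2'
      push_cast at h
      push_cast [hddef]
      linear_combination -h
    have hp2an : ‖(2 : ℚ_[2]) ^ (a * n)‖ = (2 : ℝ) ^ (-(a * n : ℕ) : ℤ) := by
      simpa using Padic.norm_p_pow (p := 2) (a * n)
    have hp3bn : ‖(3 : ℚ_[3]) ^ (b * n)‖ = (3 : ℝ) ^ (-(b * n : ℕ) : ℤ) := by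
      simpa using Padic.norm_p_pow (p := 3) (b * n)
    have hd2 : ((2 : ℤ) ^ (a * n)) ∣ d := by
      apply (Padic.norm_int_le_pow_iff_dvd d (a * n)).mp
      rw [show (((2 : ℕ)) : ℝ) = (2 : ℝ) by norm_num]
      rw [e2, norm_mul, hp2an]
      calc (2 : ℝ) ^ (-(a*n : ℕ) : ℤ) * ‖z - z'‖ ≤ (2 : ℝ) ^ (-(a*n : ℕ) : ℤ) * 1 := by
            apply mul_le_mul_of_nonneg_left (norm_sub_le_one hz hz') (by positivity)
        _ = (2 : ℝ) ^ (-(a*n : ℕ) : ℤ) := mul_one _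
    have hd3 : ((3 : ℤ) ^ (b * n)) ∣ d := by
      apply (Padic.norm_int_le_pow_iff_dvd d (b * n)).mp
      rw [show (((3 : ℕ)) : ℝ) = (3 : ℝ) by norm_num]
      rw [e3, norm_mul, hp3bn]
      calc (3 : ℝ) ^ (-(b*n : ℕ) : ℤ) * ‖w - w'‖ ≤ (3 : ℝ) ^ (-(b*n : ℕ) : ℤ) * 1 := by
            apply mul_le_mul_of_nonneg_left (norm_sub_le_one hw hw') (by positivity)
        _ = (3 : ℝ) ^ (-(b*n : ℕ) : ℤ) := mul_one _
    have hcop : IsCoprime ((2 : ℤ) ^ (a * n)) ((3 : ℤ) ^ (b * n)) := by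
      apply IsCoprime.pow
      rw [Int.isCoprime_iff_gcd_eq_one]; decide
    have hdvd : ((N ^ n : ℕ) : ℤ) ∣ d := by
      have h := hcop.mul_dvd hd2 hd3
      rwa [show ((N ^ n : ℕ) : ℤ) = (2 : ℤ) ^ (a * n) * 3 ^ (b * n) by
        rw [hN]; push_cast; rw [mul_pow, ← pow_mul, ← pow_mul]]
    have habs : |d| < ((N ^ n : ℕ) : ℤ) := by
      have h1 : (m : ℤ) < (L : ℤ) := by exact_mod_cast hm
      have h2 : (m' : ℤ) < (L : ℤ) := by exact_mod_cast hm'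
      have h3 : ((L : ℕ) : ℤ) ≤ ((N ^ n : ℕ) : ℤ) := by exact_mod_cast hLN
      rw [abs_lt, hddef]
      push_cast at h1 h2 h3 ⊢
      constructor
      · have hm0 : (0:ℤ) ≤ (m:ℤ) := Int.natCast_nonneg m
        linarith
      · have hm0 : (0:ℤ) ≤ (m':ℤ) := Int.natCast_nonneg m'
        linarith
    have : d = 0 := Int.eq_zero_of_abs_lt_dvd hdvd habs
    apply hne
    omega
end
end

section
/- Let a, b ≥ 1 be integers, N = 2^a·3^b, 0 ≤ k < N, and n ≥ 1. Then the preimage of A_k under multiplication by N^n on G/Γ, computed in F, is {x ∈ F : rep(N^n·x) ∈ A_k} = ⋃_{m=0}^{N^n − 1} [k/N^{n+1} + m/N^n, (k+1)/N^{n+1} + m/N^n) × ℤ₂ × ℤ₃, and this union is pairwise disjoint. -/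
open Set

noncomputable section

/-- An element of `ℤ[1/6]` which is a `2`-adic and a `3`-adic integer is an integer. -/
lemma zInv6_int {q : ℚ} (hq : q ∈ zInv6) (h2 : ‖((q : ℚ) : ℚ_[2])‖ ≤ 1)
    (h3 : ‖((q : ℚ) : ℚ_[3])‖ ≤ 1) : ∃ w : ℤ, q = w := by
  obtain ⟨z, c, rfl⟩ := hq
  have hd2 : (2 ^ c : ℤ) ∣ z := by
    have := Padic.norm_int_le_pow_iff_dvd (p := 2) z c
    push_cast at this
    rw [← this]
    have h3u : ‖((3 : ℤ) : ℚ_[2])‖ = 1 := by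
      rcases lt_or_eq_of_le (Padic.norm_int_le_one (p := 2) 3) with h | h
      · rw [Padic.norm_intCast_lt_one_iff] at h; omega
      · exact h
    have hzq : ((z : ℚ) / 6 ^ c : ℚ) * (6 ^ c : ℚ) = z := by
      field_simp
    have : (((z : ℚ) / 6 ^ c : ℚ) : ℚ_[2]) * ((6 : ℚ_[2]) ^ c) = ((z : ℤ) : ℚ_[2]) := by
      have h' := congrArg (fun t : ℚ => (t : ℚ_[2])) hzq
      push_cast at h' ⊢
      exact h'
    calc ‖((z : ℤ) : ℚ_[2])‖ = ‖(((z : ℚ) / 6 ^ c : ℚ) : ℚ_[2])‖ * ‖(6 : ℚ_[2])‖ ^ c := by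
          rw [← this, norm_mul, norm_pow]
      _ ≤ 1 * ‖(6 : ℚ_[2])‖ ^ c := by gcongr
      _ = ((2 : ℝ) ^ (-(c:ℤ))) := by
          have hpn : ‖(2 : ℚ_[2])‖ = (2:ℝ)⁻¹ := by
            rw [show (2:ℚ_[2]) = ((2:ℕ):ℚ_[2]) by norm_num, Padic.norm_p]
            norm_num
          have h6n : ‖(6 : ℚ_[2])‖ = (2:ℝ)⁻¹ := by
            rw [show (6:ℚ_[2]) = 2 * ((3:ℤ):ℚ_[2]) by norm_num, norm_mul, h3u, mul_one, hpn]
          rw [one_mul, h6n, inv_pow, zpow_neg, zpow_natCast]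
  have hd3 : (3 ^ c : ℤ) ∣ z := by
    have := Padic.norm_int_le_pow_iff_dvd (p := 3) z c
    push_cast at this
    rw [← this]
    have h2u : ‖((2 : ℤ) : ℚ_[3])‖ = 1 := by
      rcases lt_or_eq_of_le (Padic.norm_int_le_one (p := 3) 2) with h | h
      · rw [Padic.norm_intCast_lt_one_iff] at h; omega
      · exact h
    have hzq : ((z : ℚ) / 6 ^ c : ℚ) * (6 ^ c : ℚ) = z := by
      field_simp
    have : (((z : ℚ) / 6 ^ c : ℚ) : ℚ_[3]) * ((6 : ℚ_[3]) ^ c) = ((z : ℤ) : ℚ_[3]) := by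
      have h' := congrArg (fun t : ℚ => (t : ℚ_[3])) hzq
      push_cast at h' ⊢
      exact h'
    calc ‖((z : ℤ) : ℚ_[3])‖ = ‖(((z : ℚ) / 6 ^ c : ℚ) : ℚ_[3])‖ * ‖(6 : ℚ_[3])‖ ^ c := by
          rw [← this, norm_mul, norm_pow]
      _ ≤ 1 * ‖(6 : ℚ_[3])‖ ^ c := by gcongr
      _ = ((3 : ℝ) ^ (-(c:ℤ))) := by
          have hpn : ‖(3 : ℚ_[3])‖ = (3:ℝ)⁻¹ := by
            rw [show (3:ℚ_[3]) = ((3:ℕ):ℚ_[3]) by norm_num, Padic.norm_p]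
            norm_num
          have h6n : ‖(6 : ℚ_[3])‖ = (3:ℝ)⁻¹ := by
            rw [show (6:ℚ_[3]) = 3 * ((2:ℤ):ℚ_[3]) by norm_num, norm_mul, h2u, mul_one, hpn]
          rw [one_mul, h6n, inv_pow, zpow_neg, zpow_natCast]
  have hco : IsCoprime ((2:ℤ) ^ c) ((3:ℤ) ^ c) := by
    apply IsCoprime.pow
    rw [Int.isCoprime_iff_gcd_eq_one]; decide
  have hd6 : (6 ^ c : ℤ) ∣ z := by
    have h62 : ((6:ℤ) ^ c) = 2 ^ c * 3 ^ c := by rw [← mul_pow]; norm_num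
    rw [h62]
    exact hco.mul_dvd hd2 hd3
  obtain ⟨w, rfl⟩ := hd6
  exact ⟨w, by push_cast; field_simp⟩

lemma zInv6_sub_intCast {q : ℚ} (hq : q ∈ zInv6) (m : ℤ) : q - (m : ℚ) ∈ zInv6 := by
  obtain ⟨z, c, rfl⟩ := hq
  refine ⟨z - m * 6 ^ c, c, ?_⟩
  have h6 : ((6:ℚ) ^ c) ≠ 0 := by positivity
  field_simp
  push_cast
  ring

/-- The preimage of the atom `A_k` under multiplication by `N^n` on `G/Γ`, computed in
`F`, is the disjoint union over `0 ≤ m < N^n` of the rectangles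
`[k/N^{n+1} + m/N^n, (k+1)/N^{n+1} + m/N^n) × ℤ₂ × ℤ₃`. -/
theorem preimage_atom_iterate (rep : G → G) (hrep : ∀ x : G, rep x ∈ F ∧ x - rep x ∈ Γ)
    (a b : ℕ) (ha : 1 ≤ a) (hb : 1 ≤ b) (N : ℕ) (hN : N = 2 ^ a * 3 ^ b)
    (k : ℕ) (hk : k < N) (n : ℕ) (hn : 1 ≤ n) :
    ({x : G | x ∈ F ∧ rep (act ((N : ℚ) ^ n) x) ∈ A N k} =
      ⋃ m ∈ Finset.range (N ^ n),
        {x : G | x.1 ∈ Set.Ico ((k : ℝ) / (N : ℝ) ^ (n + 1) + (m : ℝ) / (N : ℝ) ^ n)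
            (((k : ℝ) + 1) / (N : ℝ) ^ (n + 1) + (m : ℝ) / (N : ℝ) ^ n) ∧
          ‖x.2.1‖ ≤ 1 ∧ ‖x.2.2‖ ≤ 1}) ∧
    ∀ m ∈ Finset.range (N ^ n), ∀ m' ∈ Finset.range (N ^ n), m ≠ m' →
      Disjoint
        {x : G | x.1 ∈ Set.Ico ((k : ℝ) / (N : ℝ) ^ (n + 1) + (m : ℝ) / (N : ℝ) ^ n)
            (((k : ℝ) + 1) / (N : ℝ) ^ (n + 1) + (m : ℝ) / (N : ℝ) ^ n) ∧
          ‖x.2.1‖ ≤ 1 ∧ ‖x.2.2‖ ≤ 1}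
        {x : G | x.1 ∈ Set.Ico ((k : ℝ) / (N : ℝ) ^ (n + 1) + (m' : ℝ) / (N : ℝ) ^ n)
            (((k : ℝ) + 1) / (N : ℝ) ^ (n + 1) + (m' : ℝ) / (N : ℝ) ^ n) ∧
          ‖x.2.1‖ ≤ 1 ∧ ‖x.2.2‖ ≤ 1} := by
  have hN1 : 1 ≤ N := by
    subst hN
    have : 0 < 2 ^ a * 3 ^ b := by positivity
    omega
  have hNR : (1:ℝ) ≤ (N:ℝ) := by exact_mod_cast hN1
  have hN0R : (0:ℝ) < (N:ℝ) := by linarith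
  have hR : (0:ℝ) < (N:ℝ) ^ n := by positivity
  have hR' : (0:ℝ) < (N:ℝ) ^ (n+1) := by positivity
  have hkN : (k:ℝ) + 1 ≤ (N:ℝ) := by exact_mod_cast hk
  -- common splitting identity
  have hsplit : ∀ s t : ℝ, s / (N:ℝ) ^ (n+1) + t / (N:ℝ) ^ n = (s / N + t) / (N:ℝ) ^ n := by
    intro s t
    rw [pow_succ]
    field_simp
  -- norm facts
  have hcast2 : (((N : ℚ) ^ n : ℚ) : ℚ_[2]) = (((N ^ n : ℕ) : ℤ) : ℚ_[2]) := by push_cast; ring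
  have hcast3 : (((N : ℚ) ^ n : ℚ) : ℚ_[3]) = (((N ^ n : ℕ) : ℤ) : ℚ_[3]) := by push_cast; ring
  have hmul2 : ∀ u : ℚ_[2], ‖u‖ ≤ 1 → ‖(((N : ℚ) ^ n : ℚ) : ℚ_[2]) * u‖ ≤ 1 := by
    intro u hu
    rw [hcast2, norm_mul]
    exact mul_le_one₀ (Padic.norm_int_le_one _) (norm_nonneg _) hu
  have hmul3 : ∀ u : ℚ_[3], ‖u‖ ≤ 1 → ‖(((N : ℚ) ^ n : ℚ) : ℚ_[3]) * u‖ ≤ 1 := by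
    intro u hu
    rw [hcast3, norm_mul]
    exact mul_le_one₀ (Padic.norm_int_le_one _) (norm_nonneg _) hu
  have tri2 : ∀ u v : ℚ_[2], ‖u‖ ≤ 1 → ‖v‖ ≤ 1 → ‖u - v‖ ≤ 1 := by
    intro u v hu hv
    calc ‖u - v‖ = ‖u + (-v)‖ := by rw [sub_eq_add_neg]
      _ ≤ max ‖u‖ ‖-v‖ := Padic.nonarchimedean _ _
      _ ≤ 1 := max_le hu (by rwa [norm_neg])
  have tri3 : ∀ u v : ℚ_[3], ‖u‖ ≤ 1 → ‖v‖ ≤ 1 → ‖u - v‖ ≤ 1 := by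
    intro u v hu hv
    calc ‖u - v‖ = ‖u + (-v)‖ := by rw [sub_eq_add_neg]
      _ ≤ max ‖u‖ ‖-v‖ := Padic.nonarchimedean _ _
      _ ≤ 1 := max_le hu (by rwa [norm_neg])
  constructor
  · ext x
    simp only [Set.mem_setOf_eq, Set.mem_iUnion, Finset.mem_range, exists_prop,
      F, A, Set.mem_Ico]
    set y : G := act ((N : ℚ) ^ n) x with hy
    obtain ⟨hyF, hyΓ⟩ := hrep y
    obtain ⟨q, hq, hΔ⟩ := hyΓ
    have e1 : (q : ℝ) = y.1 - (rep y).1 := congrArg Prod.fst hΔ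
    have e2 : (q : ℚ_[2]) = y.2.1 - (rep y).2.1 := congrArg (fun z : G => z.2.1) hΔ
    have e3 : (q : ℚ_[3]) = y.2.2 - (rep y).2.2 := congrArg (fun z : G => z.2.2) hΔ
    have hy1 : y.1 = (N:ℝ)^n * x.1 := by
      show (((N:ℚ)^n : ℚ) : ℝ) * x.1 = _
      push_cast
      ring
    have hy2 : y.2.1 = (((N : ℚ) ^ n : ℚ) : ℚ_[2]) * x.2.1 := rfl
    have hy3 : y.2.2 = (((N : ℚ) ^ n : ℚ) : ℚ_[3]) * x.2.2 := rfl
    obtain ⟨⟨hrep1lo, hrep1hi⟩, hrep2, hrep3⟩ := hyF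
    constructor
    · rintro ⟨⟨⟨hx1lo, hx1hi⟩, hx2, hx3⟩, ⟨hA1lo, hA1hi⟩, hA2, hA3⟩
      -- q is an integer
      have hq2 : ‖(q : ℚ_[2])‖ ≤ 1 := by
        rw [e2]; exact tri2 _ _ (hy2 ▸ hmul2 _ hx2) hrep2
      have hq3 : ‖(q : ℚ_[3])‖ ≤ 1 := by
        rw [e3]; exact tri3 _ _ (hy3 ▸ hmul3 _ hx3) hrep3
      obtain ⟨w, hw⟩ := zInv6_int hq hq2 hq3
      have e1' : (w : ℝ) = y.1 - (rep y).1 := by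
        rw [← e1, hw]; push_cast; ring
      have hy1lo : 0 ≤ y.1 := by rw [hy1]; positivity
      have hy1hi : y.1 < (N:ℝ)^n := by
        rw [hy1]
        calc (N:ℝ)^n * x.1 < (N:ℝ)^n * 1 := by gcongr <;> linarith
          _ = (N:ℝ)^n := mul_one _
      have hrep01 : 0 ≤ (rep y).1 := le_trans (by positivity) hrep1lo
      have hrep02 : (rep y).1 < 1 := lt_of_lt_of_le hA1hi (by
        rw [div_le_one hN0R]; exact hkN)
      have hwlb : (0:ℤ) ≤ w := by
        have : (-1:ℝ) < (w:ℝ) := by rw [e1']; linarith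
        have : (-1:ℤ) < w := by exact_mod_cast this
        omega
      have hwub : w < (N^n : ℕ) := by
        have : (w:ℝ) < ((N^n : ℕ) : ℝ) := by
          rw [e1']; push_cast; linarith
        exact_mod_cast this
      have hwt : ((w.toNat : ℕ) : ℝ) = (w : ℝ) := by
        exact_mod_cast Int.toNat_of_nonneg hwlb
      have hxR : x.1 * (N:ℝ)^n = (rep y).1 + (w:ℝ) := by
        rw [mul_comm, ← hy1]; linarith [e1']
      refine ⟨w.toNat, by omega, ⟨?_, ?_⟩, hx2, hx3⟩
      · rw [hwt, hsplit, div_le_iff₀ hR, hxR]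
        linarith
      · rw [hwt, hsplit, lt_div_iff₀ hR, hxR]
        linarith
    · rintro ⟨m, hm, ⟨hxlo, hxhi⟩, hx2, hx3⟩
      rw [hsplit] at hxlo hxhi
      have hmR : (m:ℝ) + 1 ≤ (N:ℝ)^n := by
        have : ((m+1 : ℕ) : ℝ) ≤ ((N^n : ℕ) : ℝ) := by exact_mod_cast hm
        push_cast at this
        linarith
      have hkd0 : (0:ℝ) ≤ (k:ℝ)/N := by positivity
      have hkd1 : ((k:ℝ)+1)/N ≤ 1 := by rw [div_le_one hN0R]; exact hkN
      have hx1lo : (0:ℝ) ≤ x.1 := by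
        refine le_trans ?_ hxlo
        positivity
      have hx1hi : x.1 < 1 := by
        have : (((k:ℝ)+1)/N + m) / (N:ℝ)^n ≤ 1 := by
          rw [div_le_one hR]; linarith
        linarith
      -- bounds for y.1
      have hylo : (k:ℝ)/N + m ≤ (N:ℝ)^n * x.1 := by
        rw [div_le_iff₀ hR] at hxlo; linarith [hxlo]
      have hyhi : (N:ℝ)^n * x.1 < ((k:ℝ)+1)/N + m := by
        rw [lt_div_iff₀ hR] at hxhi; linarith [hxhi]
      -- q - m is an integer, in fact zero
      have hq' : q - (m:ℚ) ∈ zInv6 := by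
        have := zInv6_sub_intCast hq (m : ℤ)
        push_cast at this
        exact this
      have hmn2 : ‖((m:ℕ) : ℚ_[2])‖ ≤ 1 := by
        have := Padic.norm_int_le_one (p := 2) (m : ℤ)
        push_cast at this
        exact this
      have hmn3 : ‖((m:ℕ) : ℚ_[3])‖ ≤ 1 := by
        have := Padic.norm_int_le_one (p := 3) (m : ℤ)
        push_cast at this
        exact this
      have hq'2 : ‖((q - (m:ℚ) : ℚ) : ℚ_[2])‖ ≤ 1 := by
        push_cast
        rw [e2]
        exact tri2 _ _ (tri2 _ _ (hy2 ▸ hmul2 _ hx2) hrep2) hmn2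
      have hq'3 : ‖((q - (m:ℚ) : ℚ) : ℚ_[3])‖ ≤ 1 := by
        push_cast
        rw [e3]
        exact tri3 _ _ (tri3 _ _ (hy3 ▸ hmul3 _ hx3) hrep3) hmn3
      obtain ⟨w, hw⟩ := zInv6_int hq' hq'2 hq'3
      have e1' : (w : ℝ) = (y.1 - (rep y).1) - m := by
        have := congrArg (fun t : ℚ => (t : ℝ)) hw
        push_cast at this
        rw [← e1]
        push_cast
        linarith [this]
      have hrep02 : (rep y).1 < 1 := hrep1hi
      have hw0 : w = 0 := by
        have h1 : (-1:ℝ) < (w:ℝ) := by rw [e1', hy1]; linarith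
        have h2 : (w:ℝ) < 1 := by rw [e1', hy1]; linarith
        have h1' : (-1:ℤ) < w := by exact_mod_cast h1
        have h2' : w < 1 := by exact_mod_cast h2
        omega
      have hqm : q = (m:ℚ) := by
        have : q - (m:ℚ) = 0 := by rw [hw, hw0]; norm_num
        linarith [this]
      have hΔ' : Δ ((m:ℕ) : ℚ) = y - rep y := by rw [← hqm]; exact hΔ
      have hrepy : rep y = y - Δ ((m:ℕ) : ℚ) := by rw [hΔ']; abel
      refine ⟨⟨⟨hx1lo, hx1hi⟩, hx2, hx3⟩, ?_, ?_, ?_⟩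
      · rw [hrepy]
        show (k:ℝ)/N ≤ y.1 - (((m:ℕ):ℚ) : ℝ) ∧ y.1 - (((m:ℕ):ℚ) : ℝ) < ((k:ℝ)+1)/N
        rw [hy1]
        push_cast
        constructor <;> linarith
      · rw [hrepy]
        show ‖y.2.1 - (((m:ℕ):ℚ) : ℚ_[2])‖ ≤ 1
        push_cast
        exact tri2 _ _ (hy2 ▸ hmul2 _ hx2) hmn2
      · rw [hrepy]
        show ‖y.2.2 - (((m:ℕ):ℚ) : ℚ_[3])‖ ≤ 1
        push_cast
        exact tri3 _ _ (hy3 ▸ hmul3 _ hx3) hmn3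
  · have key : ∀ u v : ℕ, u < v →
        Disjoint
          {x : G | x.1 ∈ Set.Ico ((k : ℝ) / (N : ℝ) ^ (n + 1) + (u : ℝ) / (N : ℝ) ^ n)
              (((k : ℝ) + 1) / (N : ℝ) ^ (n + 1) + (u : ℝ) / (N : ℝ) ^ n) ∧
            ‖x.2.1‖ ≤ 1 ∧ ‖x.2.2‖ ≤ 1}
          {x : G | x.1 ∈ Set.Ico ((k : ℝ) / (N : ℝ) ^ (n + 1) + (v : ℝ) / (N : ℝ) ^ n)
              (((k : ℝ) + 1) / (N : ℝ) ^ (n + 1) + (v : ℝ) / (N : ℝ) ^ n) ∧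
            ‖x.2.1‖ ≤ 1 ∧ ‖x.2.2‖ ≤ 1} := by
      intro u v huv
      rw [Set.disjoint_left]
      rintro x ⟨⟨_, hu2⟩, _, _⟩ ⟨⟨hv1, _⟩, _, _⟩
      have e : ((k:ℝ)+1)/(N:ℝ)^(n+1) = (k:ℝ)/(N:ℝ)^(n+1) + 1/(N:ℝ)^(n+1) := by ring
      have f : 1/(N:ℝ)^(n+1) ≤ 1/(N:ℝ)^n := by
        apply one_div_le_one_div_of_le hR
        exact pow_le_pow_right₀ hNR (by omega)
      have g : (u:ℝ)/(N:ℝ)^n + 1/(N:ℝ)^n ≤ (v:ℝ)/(N:ℝ)^n := by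
        rw [← add_div]
        have huv' : (u:ℝ) + 1 ≤ (v:ℝ) := by exact_mod_cast huv
        gcongr
      linarith
    intro m hm m' hm' hne
    rcases hne.lt_or_gt with h | h
    · exact key _ _ h
    · exact (key _ _ h).symm
end
end
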